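/- arXiv:2501.09312 — 3 statements merged into one kernel-verified Lean document; each statement's English description precedes it below -/
import Mathlib

section
/- (Key identity in the proof of Theorem 2) For every g : G, ⟪X, vec (f g)⟫ = ⟪F, (f' g).mulVec ψ⟫, where ⟪·,·⟫ denotes the inner product of the corresponding EuclideanSpace (conjugate-linear in the first argument). -/
open MeasureTheory
open scoped Kronecker Matrix ComplexOrder

noncomputable section

namespace GroupEstimation

variable {G : Type} [Group G] [TopologicalSpace G] [IsTopologicalGroup G]
  [CompactSpace G] [T2Space G] [MeasurableSpace G] [BorelSpace G]
variable {Λ : Type} [Fintype Λ] [Nonempty Λ] [DecidableEq Λ]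

/-- Vectorization of a square matrix. -/
def vecSq {ι : Type} (A : Matrix ι ι ℂ) : EuclideanSpace ℂ (ι × ι) :=
  WithLp.toLp 2 fun p => A p.1 p.2

/-- The block-diagonal representation `f` on `⊕_λ U_λ ⊗ ℂ^{n_λ}`. -/
def bigF (d n : Λ → ℕ) (f_ : ∀ l : Λ, G → Matrix (Fin (d l)) (Fin (d l)) ℂ) (g : G) :
    Matrix (Σ l : Λ, Fin (d l) × Fin (n l)) (Σ l : Λ, Fin (d l) × Fin (n l)) ℂ :=
  Matrix.blockDiagonal' fun l => f_ l g ⊗ₖ (1 : Matrix (Fin (n l)) (Fin (n l)) ℂ)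

/-- The block-diagonal representation `f'` on `⊕_λ U_λ ⊗ ℂ^{d_λ}`. -/
def bigF' (d : Λ → ℕ) (f_ : ∀ l : Λ, G → Matrix (Fin (d l)) (Fin (d l)) ℂ) (g : G) :
    Matrix (Σ l : Λ, Fin (d l) × Fin (d l)) (Σ l : Λ, Fin (d l) × Fin (d l)) ℂ :=
  Matrix.blockDiagonal' fun l => f_ l g ⊗ₖ (1 : Matrix (Fin (d l)) (Fin (d l)) ℂ)

/-- The vector `F = ⊕_λ √(d λ) |I_λ⟩⟩`. -/
def Fvec (d : Λ → ℕ) : EuclideanSpace ℂ (Σ l : Λ, Fin (d l) × Fin (d l)) :=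
  WithLp.toLp 2 fun p => if p.2.1 = p.2.2 then (Real.sqrt (d p.1) : ℂ) else 0

/-- The seed vector `X = ⊕_{λ,λ'} |X_{λ,λ'}⟩⟩ ⊗ |Y_{λ,λ'}⟩`. -/
def Xvec (d n : Λ → ℕ)
    (Xm : ∀ l l' : Λ, Matrix (Fin (d l)) (Fin (d l')) ℂ)
    (Y : ∀ l l' : Λ, Fin (n l) × Fin (n l') → ℂ) :
    EuclideanSpace ℂ ((Σ l : Λ, Fin (d l) × Fin (n l)) × (Σ l : Λ, Fin (d l) × Fin (n l))) :=
  WithLp.toLp 2 fun pq => Xm pq.1.1 pq.2.1 pq.1.2.1 pq.2.2.1 * Y pq.1.1 pq.2.1 (pq.1.2.2, pq.2.2.2)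

/-- The input state `ψ[T]` of the simulating parallel strategy. -/
def psiVec (d n : Λ → ℕ)
    (Xm : ∀ l l' : Λ, Matrix (Fin (d l)) (Fin (d l')) ℂ)
    (Y : ∀ l l' : Λ, Fin (n l) × Fin (n l') → ℂ) :
    EuclideanSpace ℂ (Σ l : Λ, Fin (d l) × Fin (d l)) :=
  WithLp.toLp 2 fun p => ((((d p.1 : ℝ)) ^ (-(1:ℝ)/2) : ℝ) : ℂ) *
    (∑ a, star (Y p.1 p.1 (a, a))) * star (Xm p.1 p.1 p.2.2 p.2.1)

/-- The average state on the doubled system (entrywise Bochner integral). -/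
def rhoMuB (μ : Measure G) (d n : Λ → ℕ)
    (f_ : ∀ l : Λ, G → Matrix (Fin (d l)) (Fin (d l)) ℂ) :
    Matrix ((Σ l : Λ, Fin (d l) × Fin (n l)) × (Σ l : Λ, Fin (d l) × Fin (n l)))
      ((Σ l : Λ, Fin (d l) × Fin (n l)) × (Σ l : Λ, Fin (d l) × Fin (n l))) ℂ :=
  fun p q => ∫ g, bigF d n f_ g p.1 p.2 * star (bigF d n f_ g q.1 q.2) ∂μ

theorem lhs_eq (d n : Λ → ℕ)
    (M : ∀ l : Λ, Matrix (Fin (d l)) (Fin (d l)) ℂ)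
    (Xm : ∀ l l' : Λ, Matrix (Fin (d l)) (Fin (d l')) ℂ)
    (Y : ∀ l l' : Λ, Fin (n l) × Fin (n l') → ℂ) :
    (∑ p : (Σ l : Λ, Fin (d l) × Fin (n l)) × (Σ l : Λ, Fin (d l) × Fin (n l)),
      (starRingEnd ℂ) (Xm p.1.1 p.2.1 p.1.2.1 p.2.2.1 * Y p.1.1 p.2.1 (p.1.2.2, p.2.2.2)) *
        (Matrix.blockDiagonal' fun l => M l ⊗ₖ (1 : Matrix (Fin (n l)) (Fin (n l)) ℂ)) p.1 p.2)
    = ∑ l : Λ, (∑ a, (starRingEnd ℂ) (Y l l (a, a))) *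
        ∑ k, ∑ k', (starRingEnd ℂ) (Xm l l k k') * M l k k' := by
  rw [Fintype.sum_prod_type, ← Finset.univ_sigma_univ, Finset.sum_sigma]
  refine Finset.sum_congr rfl fun l _ => ?_
  rw [Fintype.sum_prod_type]
  have key : ∀ (k : Fin (d l)) (a : Fin (n l)),
      (∑ y ∈ (Finset.univ.sigma fun _ => Finset.univ :
          Finset ((l' : Λ) × (Fin (d l') × Fin (n l')))),
        (starRingEnd ℂ) (Xm l y.1 k y.2.1 * Y l y.1 (a, y.2.2)) *
          (Matrix.blockDiagonal' fun l => M l ⊗ₖ (1 : Matrix (Fin (n l)) (Fin (n l)) ℂ))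
            ⟨l, (k, a)⟩ y)
      = ∑ k', (starRingEnd ℂ) (Xm l l k k') * ((starRingEnd ℂ) (Y l l (a, a)) * M l k k') := by
    intro k a
    rw [Finset.sum_sigma]
    rw [Finset.sum_eq_single l]
    · rw [Fintype.sum_prod_type]
      refine Finset.sum_congr rfl fun k' _ => ?_
      simp [Matrix.blockDiagonal'_apply_eq, Matrix.one_apply, mul_ite,
        Finset.sum_ite_eq', map_mul]
      ring
    · intro l' _ hl'
      simp [Matrix.blockDiagonal'_apply_ne _ _ _ (Ne.symm hl')]
    · simp
  simp only [key]
  rw [Finset.sum_mul, Finset.sum_comm]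
  refine Finset.sum_congr rfl fun a _ => ?_
  simp only [Finset.mul_sum]
  refine Finset.sum_congr rfl fun k _ => Finset.sum_congr rfl fun k' _ => by ring

theorem rhs_eq (d n : Λ → ℕ) (hd : ∀ l, 0 < d l)
    (M : ∀ l : Λ, Matrix (Fin (d l)) (Fin (d l)) ℂ)
    (Xm : ∀ l l' : Λ, Matrix (Fin (d l)) (Fin (d l')) ℂ)
    (Y : ∀ l l' : Λ, Fin (n l) × Fin (n l') → ℂ) :
    (∑ p : (Σ l : Λ, Fin (d l) × Fin (d l)),
      (starRingEnd ℂ) ((if p.2.1 = p.2.2 then ((Real.sqrt (d p.1) : ℝ) : ℂ) else 0)) *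
        (Matrix.blockDiagonal' fun l => M l ⊗ₖ (1 : Matrix (Fin (d l)) (Fin (d l)) ℂ)).mulVec
          (fun q => ((((d q.1 : ℝ)) ^ (-(1:ℝ)/2) : ℝ) : ℂ) *
            (∑ a, (starRingEnd ℂ) (Y q.1 q.1 (a, a))) *
              (starRingEnd ℂ) (Xm q.1 q.1 q.2.2 q.2.1)) p)
    = ∑ l : Λ, (∑ a, (starRingEnd ℂ) (Y l l (a, a))) *
        ∑ k, ∑ k', (starRingEnd ℂ) (Xm l l k k') * M l k k' := by
  have hsq : ∀ l : Λ, ((Real.sqrt (d l) : ℝ) : ℂ) * ((((d l : ℝ)) ^ (-(1:ℝ)/2) : ℝ) : ℂ) = 1 := by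
    intro l
    rw [← Complex.ofReal_mul, Real.sqrt_eq_rpow, ← Real.rpow_add (by exact_mod_cast hd l)]
    norm_num
  rw [← Finset.univ_sigma_univ, Finset.sum_sigma]
  refine Finset.sum_congr rfl fun l _ => ?_
  have key : ∀ (k k' : Fin (d l)),
      (Matrix.blockDiagonal' fun l => M l ⊗ₖ (1 : Matrix (Fin (d l)) (Fin (d l)) ℂ)).mulVec
          (fun q => ((((d q.1 : ℝ)) ^ (-(1:ℝ)/2) : ℝ) : ℂ) *
            (∑ a, (starRingEnd ℂ) (Y q.1 q.1 (a, a))) *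
              (starRingEnd ℂ) (Xm q.1 q.1 q.2.2 q.2.1)) ⟨l, (k, k')⟩
      = ((((d l : ℝ)) ^ (-(1:ℝ)/2) : ℝ) : ℂ) * (∑ a, (starRingEnd ℂ) (Y l l (a, a))) *
          ∑ j, M l k j * (starRingEnd ℂ) (Xm l l k' j) := by
    intro k k'
    rw [Matrix.mulVec, dotProduct, ← Finset.univ_sigma_univ, Finset.sum_sigma]
    rw [Finset.sum_eq_single l]
    · rw [Fintype.sum_prod_type]
      rw [Finset.mul_sum]
      refine Finset.sum_congr rfl fun j _ => ?_
      simp [Matrix.blockDiagonal'_apply_eq, Matrix.one_apply, mul_ite, ite_mul,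
        Finset.sum_ite_eq']
      ring
    · intro l' _ hl'
      simp [Matrix.blockDiagonal'_apply_ne _ _ _ (Ne.symm hl')]
    · simp
  rw [Fintype.sum_prod_type]
  simp only [key]
  classical
  rw [Finset.sum_comm]
  simp only [apply_ite (starRingEnd ℂ), map_zero, Complex.conj_ofReal, ite_mul, zero_mul,
    Finset.sum_ite_eq', Finset.mem_univ, if_true]
  set S := ∑ a, (starRingEnd ℂ) (Y l l (a, a)) with hS
  simp only [Finset.mul_sum]
  refine Finset.sum_congr rfl fun k _ => Finset.sum_congr rfl fun j _ => ?_
  linear_combination (S * ((starRingEnd ℂ) (Xm l l k j) * M l k j)) * hsq l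

/-- Key identity in the proof of Theorem 2: `⟪X, |f(g)⟩⟩⟫ = ⟪F, f'(g) ψ[T]⟫`. -/
theorem inner_X_vec_eq_inner_F_psi
    {G : Type} [Group G] [TopologicalSpace G] [IsTopologicalGroup G]
    [CompactSpace G] [T2Space G] [MeasurableSpace G] [BorelSpace G]
    (μ : Measure G) [μ.IsHaarMeasure] [IsProbabilityMeasure μ]
    {Λ : Type} [Fintype Λ] [Nonempty Λ] [DecidableEq Λ]
    (d n : Λ → ℕ) (hd : ∀ l, 0 < d l) (hn : ∀ l, 0 < n l)
    (f_ : ∀ l : Λ, G → Matrix (Fin (d l)) (Fin (d l)) ℂ)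
    (hf_cont : ∀ l, Continuous (f_ l))
    (hf_mul : ∀ (l : Λ) (g h : G), f_ l (g * h) = f_ l g * f_ l h)
    (hf_one : ∀ l, f_ l 1 = 1)
    (hf_unit : ∀ (l : Λ) (g : G), f_ l g ∈ Matrix.unitaryGroup (Fin (d l)) ℂ)
    (hirr : ∀ (l : Λ) (p : Submodule ℂ (Fin (d l) → ℂ)),
      (∀ g : G, ∀ x ∈ p, (f_ l g).mulVec x ∈ p) → p = ⊥ ∨ p = ⊤)
    (hdis : ∀ l l' : Λ, l ≠ l' → ¬ ∃ S : Matrix (Fin (d l')) (Fin (d l)) ℂ,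
      Function.Bijective S.mulVec ∧ ∀ g : G, S * f_ l g = f_ l' g * S)
    (Xm : ∀ l l' : Λ, Matrix (Fin (d l)) (Fin (d l')) ℂ)
    (Y : ∀ l l' : Λ, Fin (n l) × Fin (n l') → ℂ)
    (g : G) :
    (inner ℂ (Xvec d n Xm Y) (vecSq (bigF d n f_ g)) : ℂ) =
      (inner ℂ (Fvec d)
        ((WithLp.toLp 2 ((bigF' d f_ g).mulVec (WithLp.ofLp (psiVec d n Xm Y))) :
          EuclideanSpace ℂ (Σ l : Λ, Fin (d l) × Fin (d l)))) : ℂ) := by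
  simp only [PiLp.inner_apply, RCLike.inner_apply']
  exact (lhs_eq d n (fun l => f_ l g) Xm Y).trans (rhs_eq d n hd (fun l => f_ l g) Xm Y).symm

end GroupEstimation
end
end

section
/- For every GPOVM M and every g : G, the twisted map M_g is again a GPOVM: M_g B is positive semidefinite for every Borel set B, M_g ∅ = 0, M_g (⋃ j, B j) = ∑' j, M_g (B j) for every countable pairwise disjoint family of Borel sets, and ((M_g Set.univ) * ρμ).trace = 1. -/
open MeasureTheory
open scoped Kronecker Matrix ComplexOrder

noncomputable section

namespace GroupEstimation

variable {G : Type} [Group G] [TopologicalSpace G] [IsTopologicalGroup G]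
  [CompactSpace G] [T2Space G] [MeasurableSpace G] [BorelSpace G]

/-- Vectorization of a square matrix. -/
def vec {d : ℕ} (A : Matrix (Fin d) (Fin d) ℂ) : EuclideanSpace ℂ (Fin d × Fin d) :=
  WithLp.toLp 2 fun p => A p.1 p.2

/-- The rank-one state `|f(g)⟩⟩⟨⟨f(g)|`. -/
def rho {d : ℕ} (f : G → Matrix (Fin d) (Fin d) ℂ) (g : G) :
    Matrix (Fin d × Fin d) (Fin d × Fin d) ℂ :=
  fun p q => f g p.1 p.2 * star (f g q.1 q.2)

/-- `A g = f g ⊗ₖ 1`. -/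
def Amat {d : ℕ} (f : G → Matrix (Fin d) (Fin d) ℂ) (g : G) :
    Matrix (Fin d × Fin d) (Fin d × Fin d) ℂ :=
  f g ⊗ₖ (1 : Matrix (Fin d) (Fin d) ℂ)

/-- The average state `ρμ` (entrywise Bochner integral). -/
def rhoMu (μ : Measure G) {d : ℕ} (f : G → Matrix (Fin d) (Fin d) ℂ) :
    Matrix (Fin d × Fin d) (Fin d × Fin d) ℂ :=
  fun p q => ∫ g, rho f g p q ∂μ

/-- positivity, vanishing at ∅ and countable additivity (the "measure part" of a GPOVM). -/
def IsPreGPOVM {d : ℕ} (M : Set G → Matrix (Fin d × Fin d) (Fin d × Fin d) ℂ) : Prop :=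
  (∀ B : Set G, MeasurableSet B → (M B).PosSemidef) ∧ M ∅ = 0 ∧
    ∀ B : ℕ → Set G, (∀ j, MeasurableSet (B j)) → Pairwise (Function.onFun Disjoint B) →
      M (⋃ j, B j) = ∑' j, M (B j)

/-- Generalized POVM. -/
def IsGPOVM (μ : Measure G) {d : ℕ} (f : G → Matrix (Fin d) (Fin d) ℂ)
    (M : Set G → Matrix (Fin d × Fin d) (Fin d × Fin d) ℂ) : Prop :=
  IsPreGPOVM M ∧ (M Set.univ * rhoMu μ f).trace = 1

/-- Covariance of a GPOVM. -/
def IsCovariant {d : ℕ} (f : G → Matrix (Fin d) (Fin d) ℂ)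
    (M : Set G → Matrix (Fin d × Fin d) (Fin d × Fin d) ℂ) : Prop :=
  ∀ (g : G) (B : Set G), MeasurableSet B →
    M ((g * ·) '' B) = Amat f g * M B * (Amat f g)ᴴ

/-- The covariant GPOVM with seed `T`. -/
def MT (μ : Measure G) {d : ℕ} (f : G → Matrix (Fin d) (Fin d) ℂ)
    (T : Matrix (Fin d × Fin d) (Fin d × Fin d) ℂ) (B : Set G) :
    Matrix (Fin d × Fin d) (Fin d × Fin d) ℂ :=
  fun p q => ∫ g in B, (Amat f g * T * (Amat f g)ᴴ) p q ∂μ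

/-- Pointwise risk. -/
def Dpt {d : ℕ} (w : G → G → ℝ)
    (ν : (Set G → Matrix (Fin d × Fin d) (Fin d × Fin d) ℂ) → G → Measure G)
    (M : Set G → Matrix (Fin d × Fin d) (Fin d × Fin d) ℂ) (g : G) : ℝ :=
  ∫ gh, w g gh ∂(ν M g)

/-- Bayes risk. -/
def Dbayes (μ : Measure G) {d : ℕ} (w : G → G → ℝ)
    (ν : (Set G → Matrix (Fin d × Fin d) (Fin d × Fin d) ℂ) → G → Measure G)
    (M : Set G → Matrix (Fin d × Fin d) (Fin d × Fin d) ℂ) : ℝ :=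
  ∫ g, Dpt w ν M g ∂μ

/-- Minimax risk. -/
def Dmax {d : ℕ} (w : G → G → ℝ)
    (ν : (Set G → Matrix (Fin d × Fin d) (Fin d × Fin d) ℂ) → G → Measure G)
    (M : Set G → Matrix (Fin d × Fin d) (Fin d × Fin d) ℂ) : ℝ :=
  ⨆ g : G, Dpt w ν M g

/-- Twisted GPOVM `M_g`. -/
def twist {d : ℕ} (f : G → Matrix (Fin d) (Fin d) ℂ)
    (M : Set G → Matrix (Fin d × Fin d) (Fin d × Fin d) ℂ) (g : G) (B : Set G) :
    Matrix (Fin d × Fin d) (Fin d × Fin d) ℂ :=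
  (Amat f g)ᴴ * M ((g * ·) '' B) * Amat f g

/-- Matrix of the orthogonal projection onto span {v g}. -/
def P0 {d : ℕ} (f : G → Matrix (Fin d) (Fin d) ℂ) :
    Matrix (Fin d × Fin d) (Fin d × Fin d) ℂ :=
  Matrix.toEuclideanLin.symm
    ((Submodule.span ℂ (Set.range fun g => vec (f g))).subtype ∘ₗ
      (Submodule.orthogonalProjectionOnto (Submodule.span ℂ (Set.range fun g => vec (f g)))).toLinearMap)

section Aux

variable {d : ℕ}

lemma Amat_conjTranspose (f : G → Matrix (Fin d) (Fin d) ℂ) (g : G) :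
    (Amat f g)ᴴ = (f g)ᴴ ⊗ₖ (1 : Matrix (Fin d) (Fin d) ℂ) := by
  ext p q
  simp [Amat, Matrix.conjTranspose_apply, Matrix.one_apply, eq_comm, apply_ite (star : ℂ → ℂ)]

lemma Amat_mul_conjTranspose (f : G → Matrix (Fin d) (Fin d) ℂ)
    (hf_unitary : ∀ g : G, f g ∈ Matrix.unitaryGroup (Fin d) ℂ) (g : G) :
    Amat f g * (Amat f g)ᴴ = 1 := by
  rw [Amat_conjTranspose, Amat, ← Matrix.mul_kronecker_mul, Matrix.mul_one]
  have h : f g * (f g)ᴴ = 1 := by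
    have := (Matrix.mem_unitaryGroup_iff.mp (hf_unitary g))
    simpa [Matrix.star_eq_conjTranspose] using this
  rw [h, Matrix.one_kronecker_one]

lemma conjTranspose_mul_Amat (f : G → Matrix (Fin d) (Fin d) ℂ)
    (hf_unitary : ∀ g : G, f g ∈ Matrix.unitaryGroup (Fin d) ℂ) (g : G) :
    (Amat f g)ᴴ * Amat f g = 1 := by
  rw [Amat_conjTranspose, Amat, ← Matrix.mul_kronecker_mul, Matrix.mul_one]
  have h : (f g)ᴴ * f g = 1 := by
    have := (Matrix.mem_unitaryGroup_iff'.mp (hf_unitary g))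
    simpa [Matrix.star_eq_conjTranspose] using this
  rw [h, Matrix.one_kronecker_one]

lemma mul_vecMulVec (A : Matrix (Fin d × Fin d) (Fin d × Fin d) ℂ)
    (v w : Fin d × Fin d → ℂ) :
    A * Matrix.vecMulVec v w = Matrix.vecMulVec (A *ᵥ v) w := by
  ext p q
  simp [Matrix.mul_apply, Matrix.vecMulVec_apply, Matrix.mulVec, dotProduct,
    Finset.sum_mul, mul_assoc]

lemma vecMulVec_mul (A : Matrix (Fin d × Fin d) (Fin d × Fin d) ℂ)
    (v w : Fin d × Fin d → ℂ) :
    Matrix.vecMulVec v w * A = Matrix.vecMulVec v (w ᵥ* A) := by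
  ext p q
  simp [Matrix.mul_apply, Matrix.vecMulVec_apply, Matrix.vecMul, dotProduct,
    Finset.mul_sum, mul_assoc]

lemma rho_eq_vecMulVec (f : G → Matrix (Fin d) (Fin d) ℂ) (h : G) :
    rho f h = Matrix.vecMulVec (fun p => f h p.1 p.2) (star fun p => f h p.1 p.2) := by
  ext p q
  simp [rho, Matrix.vecMulVec_apply]

lemma Amat_mulVec (f : G → Matrix (Fin d) (Fin d) ℂ) (g : G)
    (X : Matrix (Fin d) (Fin d) ℂ) :
    Amat f g *ᵥ (fun p => X p.1 p.2) = fun p => (f g * X) p.1 p.2 := by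
  ext ⟨k, k'⟩
  simp [Amat, Matrix.mulVec, dotProduct, Fintype.sum_prod_type, Matrix.one_apply,
    Matrix.mul_apply, mul_ite, ite_mul]

lemma Amat_conj_rho (f : G → Matrix (Fin d) (Fin d) ℂ)
    (hf_unitary : ∀ g : G, f g ∈ Matrix.unitaryGroup (Fin d) ℂ)
    (c : G → G → ℂ) (hc_norm : ∀ g h : G, ‖c g h‖ = 1)
    (hc_proj : ∀ g h : G, f (g * h) = c g h • (f g * f h)) (g h : G) :
    Amat f g * rho f h * (Amat f g)ᴴ = rho f (g * h) := by
  have hc : c g h * star (c g h) = 1 := by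
    have h1 := hc_norm g h
    rw [Complex.star_def, Complex.mul_conj, Complex.normSq_eq_norm_sq, h1]
    norm_num
  rw [rho_eq_vecMulVec, mul_vecMulVec, vecMulVec_mul, ← Matrix.star_mulVec, Amat_mulVec]
  ext p q
  simp only [Matrix.vecMulVec_apply, rho, hc_proj g h, Matrix.smul_apply, smul_eq_mul,
    Pi.star_apply, star_mul']
  linear_combination ((f g * f h) p.1 p.2 * star ((f g * f h) q.1 q.2)) * hc.symm

lemma rho_continuous (f : G → Matrix (Fin d) (Fin d) ℂ) (hf_cont : Continuous f)
    (p q : Fin d × Fin d) : Continuous fun h => rho f h p q := by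
  apply Continuous.mul
  · exact (continuous_apply p.2).comp ((continuous_apply p.1).comp hf_cont)
  · exact continuous_star.comp ((continuous_apply q.2).comp ((continuous_apply q.1).comp hf_cont))

lemma rho_integrable (μ : Measure G) [IsProbabilityMeasure μ]
    (f : G → Matrix (Fin d) (Fin d) ℂ) (hf_cont : Continuous f)
    (p q : Fin d × Fin d) : Integrable (fun h => rho f h p q) μ := by
  rw [← integrableOn_univ]
  exact ((rho_continuous f hf_cont p q).continuousOn).integrableOn_compact isCompact_univ

lemma Amat_conj_rhoMu (μ : Measure G) [μ.IsHaarMeasure] [IsProbabilityMeasure μ]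
    (f : G → Matrix (Fin d) (Fin d) ℂ) (hf_cont : Continuous f)
    (hf_unitary : ∀ g : G, f g ∈ Matrix.unitaryGroup (Fin d) ℂ)
    (c : G → G → ℂ) (hc_norm : ∀ g h : G, ‖c g h‖ = 1)
    (hc_proj : ∀ g h : G, f (g * h) = c g h • (f g * f h)) (g : G) :
    Amat f g * rhoMu μ f * (Amat f g)ᴴ = rhoMu μ f := by
  set A := Amat f g with hA
  ext p q
  have key : ∀ (X : Matrix (Fin d × Fin d) (Fin d × Fin d) ℂ),
      (A * X * Aᴴ) p q = ∑ s, ∑ r, (A p r * Aᴴ s q) * X r s := by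
    intro X
    simp only [Matrix.mul_apply, Finset.sum_mul]
    exact Finset.sum_congr rfl fun s _ => Finset.sum_congr rfl fun r _ => by ring
  rw [key]
  have h2 : ∀ (s r : Fin d × Fin d),
      (A p r * Aᴴ s q) * (rhoMu μ f) r s
        = ∫ h, (A p r * Aᴴ s q) * rho f h r s ∂μ := fun s r =>
    (MeasureTheory.integral_const_mul _ _).symm
  simp_rw [h2]
  have hint : ∀ (s r : Fin d × Fin d),
      Integrable (fun h => (A p r * Aᴴ s q) * rho f h r s) μ := fun s r =>
    (rho_integrable μ f hf_cont r s).const_mul _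
  have h5 : ∀ s : Fin d × Fin d, (∑ r, ∫ h, (A p r * Aᴴ s q) * rho f h r s ∂μ)
      = ∫ h, ∑ r, (A p r * Aᴴ s q) * rho f h r s ∂μ := fun s =>
    (MeasureTheory.integral_finset_sum _ fun r _ => hint s r).symm
  simp_rw [h5]
  rw [← MeasureTheory.integral_finset_sum _ fun s _ =>
    integrable_finset_sum _ fun r _ => hint s r]
  have h3 : (fun h => ∑ s, ∑ r, (A p r * Aᴴ s q) * rho f h r s)
      = fun h => rho f (g * h) p q := by
    funext h
    rw [← key, Amat_conj_rho f hf_unitary c hc_norm hc_proj g h]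
  rw [h3, MeasureTheory.integral_mul_left_eq_self (fun h => rho f h p q) g]
  rfl

end Aux

/-- The twisted map `M_g` of a GPOVM is again a GPOVM. -/
theorem twist_isGPOVM
    {G : Type} [Group G] [TopologicalSpace G] [IsTopologicalGroup G]
    [CompactSpace G] [T2Space G] [MeasurableSpace G] [BorelSpace G]
    (μ : Measure G) [μ.IsHaarMeasure] [IsProbabilityMeasure μ]
    {d : ℕ} (hd : 0 < d) (f : G → Matrix (Fin d) (Fin d) ℂ)
    (hf_cont : Continuous f) (hf_one : f 1 = 1)
    (hf_unitary : ∀ g : G, f g ∈ Matrix.unitaryGroup (Fin d) ℂ)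
    (c : G → G → ℂ) (hc_norm : ∀ g h : G, ‖c g h‖ = 1)
    (hc_proj : ∀ g h : G, f (g * h) = c g h • (f g * f h))
    (M : Set G → Matrix (Fin d × Fin d) (Fin d × Fin d) ℂ)
    (hM : IsGPOVM μ f M) (g : G) :
    (∀ B : Set G, MeasurableSet B → (twist f M g B).PosSemidef) ∧
    twist f M g ∅ = 0 ∧
    (∀ B : ℕ → Set G, (∀ j, MeasurableSet (B j)) → Pairwise (Function.onFun Disjoint B) →
      twist f M g (⋃ j, B j) = ∑' j, twist f M g (B j)) ∧
    (twist f M g Set.univ * rhoMu μ f).trace = 1 := by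
  obtain ⟨⟨hpos, hempty, hadd⟩, htr⟩ := hM
  have hA1 : (Amat f g)ᴴ * Amat f g = 1 := conjTranspose_mul_Amat f hf_unitary g
  have hA2 : Amat f g * (Amat f g)ᴴ = 1 := Amat_mul_conjTranspose f hf_unitary g
  have himg : ∀ B : Set G, MeasurableSet B → MeasurableSet ((g * ·) '' B) := by
    intro B hB
    rw [Set.image_mul_left]
    exact hB.preimage (measurable_const_mul g⁻¹)
  refine ⟨?_, ?_, ?_, ?_⟩
  · intro B hB
    exact (hpos _ (himg B hB)).conjTranspose_mul_mul_same (Amat f g)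
  · simp [twist, Set.image_empty, hempty]
  · intro B hBmeas hBdisj
    let L : Matrix (Fin d × Fin d) (Fin d × Fin d) ℂ ≃ₗ[ℂ]
        Matrix (Fin d × Fin d) (Fin d × Fin d) ℂ :=
      { toFun := fun X => (Amat f g)ᴴ * X * Amat f g
        map_add' := fun X Y => by simp only [mul_add, add_mul]
        map_smul' := fun r X => by simp only [mul_smul_comm, smul_mul_assoc, RingHom.id_apply]
        invFun := fun X => Amat f g * X * (Amat f g)ᴴ
        left_inv := fun X => by
          simp only [← Matrix.mul_assoc]
          rw [hA2, Matrix.one_mul, Matrix.mul_assoc, hA2, Matrix.mul_one]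
        right_inv := fun X => by
          simp only [← Matrix.mul_assoc]
          rw [hA1, Matrix.one_mul, Matrix.mul_assoc, hA1, Matrix.mul_one] }
    have hdisj' : Pairwise (Function.onFun Disjoint fun j => (g * ·) '' B j) := fun i j hij =>
      (Set.disjoint_image_iff (mul_right_injective g)).mpr (hBdisj hij)
    have hU : ((g * ·) '' ⋃ j, B j) = ⋃ j, (g * ·) '' B j := Set.image_iUnion
    have hadd' := hadd (fun j => (g * ·) '' B j) (fun j => himg _ (hBmeas j)) hdisj'
    calc twist f M g (⋃ j, B j)
        = L (M ((g * ·) '' ⋃ j, B j)) := rfl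
      _ = L (∑' j, M ((g * ·) '' B j)) := by rw [hU, hadd']
      _ = ∑' j, L (M ((g * ·) '' B j)) :=
        L.toContinuousLinearEquiv.map_tsum
      _ = ∑' j, twist f M g (B j) := rfl
  · have huniv : ((g * ·) '' (Set.univ : Set G)) = Set.univ := by
      rw [Set.image_univ]
      exact Set.range_eq_univ.mpr fun x => ⟨g⁻¹ * x, by simp⟩
    have hkey := Amat_conj_rhoMu μ f hf_cont hf_unitary c hc_norm hc_proj g
    rw [twist, huniv]
    rw [show (Amat f g)ᴴ * M Set.univ * Amat f g * rhoMu μ f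
        = (Amat f g)ᴴ * (M Set.univ * (Amat f g * rhoMu μ f)) by
      simp only [Matrix.mul_assoc]]
    rw [Matrix.trace_mul_comm]
    rw [show M Set.univ * (Amat f g * rhoMu μ f) * (Amat f g)ᴴ
        = M Set.univ * (Amat f g * rhoMu μ f * (Amat f g)ᴴ) by
      simp only [Matrix.mul_assoc]]
    rw [hkey, htr]

end GroupEstimation
end
end

section
/- (Block formula for the average state, Section 3) The entries of ρμ are given by: ρμ (⟨λ, (k, a)⟩, ⟨λ', (k', a')⟩) (⟨σ, (l, b)⟩, ⟨σ', (l', b')⟩) equals (d λ : ℂ)⁻¹ when λ = λ' = σ = σ' and (under these identifications) k = l, k' = l', a = a', b = b', and equals 0 otherwise. Equivalently, ρμ is the block-diagonal matrix ⊕_λ (d λ)⁻¹ • (1_{d λ} ⊗ 1_{d λ} ⊗ |vec (1_{n λ})⟩⟨vec (1_{n λ})|). -/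
open MeasureTheory
open scoped Kronecker Matrix ComplexOrder

noncomputable section
set_option linter.unusedSectionVars false
set_option maxHeartbeats 1000000

namespace GroupEstimation

variable {G : Type} [Group G] [TopologicalSpace G] [IsTopologicalGroup G]
  [CompactSpace G] [T2Space G] [MeasurableSpace G] [BorelSpace G]
variable {Λ : Type} [Fintype Λ] [Nonempty Λ] [DecidableEq Λ]

section SchurAux

lemma integrable_of_cont (μ : Measure G) [IsFiniteMeasure μ] {F : G → ℂ} (hF : Continuous F) :
    Integrable F μ :=
  hF.integrable_of_hasCompactSupport (HasCompactSupport.of_compactSpace F)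

lemma rep_star {m : ℕ} {f : G → Matrix (Fin m) (Fin m) ℂ}
    (hmul : ∀ g h, f (g * h) = f g * f h) (hone : f 1 = 1)
    (hu : ∀ g, f g ∈ Matrix.unitaryGroup (Fin m) ℂ) (g : G) :
    star (f g) = f g⁻¹ := by
  have h1 : f g * f g⁻¹ = 1 := by rw [← hmul, mul_inv_cancel, hone]
  have h2 : star (f g) * f g = 1 := (hu g).1
  calc star (f g) = star (f g) * (f g * f g⁻¹) := by rw [h1, mul_one]
    _ = (star (f g) * f g) * f g⁻¹ := by rw [mul_assoc]
    _ = f g⁻¹ := by rw [h2, one_mul]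

lemma cont_entry {dl ds : ℕ} {fl : G → Matrix (Fin dl) (Fin dl) ℂ}
    {fs : G → Matrix (Fin ds) (Fin ds) ℂ}
    (hcl : Continuous fl) (hcs : Continuous fs) (A : Matrix (Fin dl) (Fin ds) ℂ)
    (i : Fin dl) (j : Fin ds) :
    Continuous fun g => (fl g * A * star (fs g)) i j := by
  have : (fun g => (fl g * A * star (fs g)) i j)
      = fun g => ∑ q, (∑ p, fl g i p * A p q) * star (fs g j q) := by
    funext g
    simp [Matrix.mul_apply, Matrix.star_apply]
  rw [this]
  exact continuous_finset_sum _ fun q _ =>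
    (continuous_finset_sum _ fun p _ => (hcl.matrix_elem i p).mul continuous_const).mul
      (continuous_star.comp (hcs.matrix_elem j q))

/-- The averaged intertwiner `∫ f_l(g) A f_s(g)* dg`. -/
def Tmat (μ : Measure G) {dl ds : ℕ} (fl : G → Matrix (Fin dl) (Fin dl) ℂ)
    (fs : G → Matrix (Fin ds) (Fin ds) ℂ) (A : Matrix (Fin dl) (Fin ds) ℂ) :
    Matrix (Fin dl) (Fin ds) ℂ :=
  Matrix.of fun i j => ∫ g, (fl g * A * star (fs g)) i j ∂μ

lemma Tmat_intertwine (μ : Measure G) [μ.IsHaarMeasure] [IsProbabilityMeasure μ]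
    {dl ds : ℕ}
    {fl : G → Matrix (Fin dl) (Fin dl) ℂ} {fs : G → Matrix (Fin ds) (Fin ds) ℂ}
    (hcl : Continuous fl) (hcs : Continuous fs)
    (hml : ∀ g h, fl (g * h) = fl g * fl h)
    (hms : ∀ g h, fs (g * h) = fs g * fs h)
    (h1s : fs 1 = 1)
    (hus : ∀ g, fs g ∈ Matrix.unitaryGroup (Fin ds) ℂ)
    (A : Matrix (Fin dl) (Fin ds) ℂ) (h : G) :
    fl h * Tmat μ fl fs A = Tmat μ fl fs A * fs h := by
  have hint : ∀ (i : Fin dl) (j : Fin ds),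
      Integrable (fun g => (fl g * A * star (fs g)) i j) μ :=
    fun i j => integrable_of_cont μ (cont_entry hcl hcs A i j)
  ext i j
  have hL : (fl h * Tmat μ fl fs A) i j = ∫ g, (fl (h * g) * A * star (fs g)) i j ∂μ := by
    rw [Matrix.mul_apply]
    calc ∑ k, fl h i k * Tmat μ fl fs A k j
        = ∑ k, ∫ g, fl h i k * (fl g * A * star (fs g)) k j ∂μ := by
          refine Finset.sum_congr rfl fun k _ => ?_
          rw [MeasureTheory.integral_const_mul]
          rfl
      _ = ∫ g, ∑ k, fl h i k * (fl g * A * star (fs g)) k j ∂μ := by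
          rw [← MeasureTheory.integral_finset_sum]
          exact fun k _ => (hint k j).const_mul _
      _ = ∫ g, (fl (h * g) * A * star (fs g)) i j ∂μ := by
          refine integral_congr_ae (Filter.Eventually.of_forall fun g => ?_)
          show ∑ k, fl h i k * (fl g * A * star (fs g)) k j
            = (fl (h * g) * A * star (fs g)) i j
          rw [← Matrix.mul_apply, ← Matrix.mul_assoc, ← Matrix.mul_assoc, ← hml]
  have hR : (Tmat μ fl fs A * fs h) i j
      = ∫ g, (fl g * A * star (fs g) * fs h) i j ∂μ := by
    rw [Matrix.mul_apply]
    calc ∑ k, Tmat μ fl fs A i k * fs h k j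
        = ∑ k, ∫ g, (fl g * A * star (fs g)) i k * fs h k j ∂μ := by
          refine Finset.sum_congr rfl fun k _ => ?_
          rw [MeasureTheory.integral_mul_const]
          rfl
      _ = ∫ g, ∑ k, (fl g * A * star (fs g)) i k * fs h k j ∂μ := by
          rw [← MeasureTheory.integral_finset_sum]
          exact fun k _ => (hint i k).mul_const _
      _ = ∫ g, (fl g * A * star (fs g) * fs h) i j ∂μ := by
          refine integral_congr_ae (Filter.Eventually.of_forall fun g => ?_)
          show ∑ k, (fl g * A * star (fs g)) i k * fs h k j
            = (fl g * A * star (fs g) * fs h) i j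
          rw [← Matrix.mul_apply]
  rw [hL, hR]
  have key : ∀ g, (fl g * A * star (fs (h⁻¹ * g))) i j
      = (fl g * A * star (fs g) * fs h) i j := by
    intro g
    have hstar : star (fs (h⁻¹ * g)) = star (fs g) * fs h := by
      rw [hms, star_mul]
      congr 1
      rw [rep_star hms h1s hus h⁻¹, inv_inv]
    rw [hstar, ← Matrix.mul_assoc]
  calc ∫ g, (fl (h * g) * A * star (fs g)) i j ∂μ
      = ∫ g, (fl (h * g) * A * star (fs (h⁻¹ * (h * g)))) i j ∂μ := by
        simp [inv_mul_cancel_left]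
    _ = ∫ g, (fl g * A * star (fs (h⁻¹ * g))) i j ∂μ :=
        integral_mul_left_eq_self (fun g => (fl g * A * star (fs (h⁻¹ * g))) i j) h
    _ = ∫ g, (fl g * A * star (fs g) * fs h) i j ∂μ := by simp only [key]

lemma matrix_eq_zero_of_mulVec {m n : ℕ} {T : Matrix (Fin m) (Fin n) ℂ}
    (h : ∀ x, T.mulVec x = 0) : T = 0 := by
  ext i j
  have := congrFun (h (Pi.single j 1)) i
  simpa using this

lemma schur_zero {dl ds : ℕ}
    {fl : G → Matrix (Fin dl) (Fin dl) ℂ} {fs : G → Matrix (Fin ds) (Fin ds) ℂ}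
    (hirr_l : ∀ p : Submodule ℂ (Fin dl → ℂ),
      (∀ g : G, ∀ x ∈ p, (fl g).mulVec x ∈ p) → p = ⊥ ∨ p = ⊤)
    (hirr_s : ∀ p : Submodule ℂ (Fin ds → ℂ),
      (∀ g : G, ∀ x ∈ p, (fs g).mulVec x ∈ p) → p = ⊥ ∨ p = ⊤)
    (hno : ¬ ∃ S : Matrix (Fin dl) (Fin ds) ℂ,
      Function.Bijective S.mulVec ∧ ∀ g : G, S * fs g = fl g * S)
    {T : Matrix (Fin dl) (Fin ds) ℂ} (hT : ∀ h : G, fl h * T = T * fs h) : T = 0 := by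
  by_contra hne
  apply hno
  have hker : ∀ g : G, ∀ x ∈ LinearMap.ker T.mulVecLin, (fs g).mulVec x ∈ LinearMap.ker T.mulVecLin := by
    intro g x hx
    simp only [LinearMap.mem_ker, Matrix.mulVecLin_apply] at hx ⊢
    rw [Matrix.mulVec_mulVec, ← hT, ← Matrix.mulVec_mulVec, hx, Matrix.mulVec_zero]
  have hran : ∀ g : G, ∀ x ∈ LinearMap.range T.mulVecLin, (fl g).mulVec x ∈ LinearMap.range T.mulVecLin := by
    intro g x hx
    obtain ⟨y, rfl⟩ := hx
    refine ⟨(fs g).mulVec y, ?_⟩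
    simp only [Matrix.mulVecLin_apply]
    rw [Matrix.mulVec_mulVec, Matrix.mulVec_mulVec, hT]
  have hker' : LinearMap.ker T.mulVecLin = ⊥ := by
    rcases hirr_s _ hker with h | h
    · exact h
    · exfalso
      apply hne
      apply matrix_eq_zero_of_mulVec
      intro x
      have : x ∈ LinearMap.ker T.mulVecLin := h ▸ Submodule.mem_top
      simpa using this
  have hran' : LinearMap.range T.mulVecLin = ⊤ := by
    rcases hirr_l _ hran with h | h
    · exfalso
      apply hne
      apply matrix_eq_zero_of_mulVec
      intro x
      have : T.mulVecLin x ∈ LinearMap.range T.mulVecLin := ⟨x, rfl⟩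
      rw [h] at this
      simpa using this
    · exact h
  refine ⟨T, ?_, fun g => (hT g).symm⟩
  rw [← Matrix.coe_mulVecLin]
  exact ⟨LinearMap.ker_eq_bot.mp hker', LinearMap.range_eq_top.mp hran'⟩

lemma schur_scalar {dl : ℕ} (hdl : 0 < dl)
    {fl : G → Matrix (Fin dl) (Fin dl) ℂ}
    (hirr_l : ∀ p : Submodule ℂ (Fin dl → ℂ),
      (∀ g : G, ∀ x ∈ p, (fl g).mulVec x ∈ p) → p = ⊥ ∨ p = ⊤)
    {T : Matrix (Fin dl) (Fin dl) ℂ} (hT : ∀ h : G, fl h * T = T * fl h) :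
    ∃ c : ℂ, T = c • 1 := by
  haveI : NeZero dl := ⟨hdl.ne'⟩
  obtain ⟨c, hc⟩ := Module.End.exists_eigenvalue T.mulVecLin
  obtain ⟨v, hv⟩ := hc.exists_hasEigenvector
  refine ⟨c, ?_⟩
  set T' : Matrix (Fin dl) (Fin dl) ℂ := T - c • 1 with hT'def
  have hT' : ∀ h : G, fl h * T' = T' * fl h := by
    intro h
    simp only [hT'def, Matrix.mul_sub, Matrix.sub_mul, Matrix.mul_smul, Matrix.smul_mul,
      Matrix.mul_one, Matrix.one_mul, hT h]
  have hker : ∀ g : G, ∀ x ∈ LinearMap.ker T'.mulVecLin,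
      (fl g).mulVec x ∈ LinearMap.ker T'.mulVecLin := by
    intro g x hx
    simp only [LinearMap.mem_ker, Matrix.mulVecLin_apply] at hx ⊢
    rw [Matrix.mulVec_mulVec, ← hT', ← Matrix.mulVec_mulVec, hx, Matrix.mulVec_zero]
  have hvmem : v ∈ LinearMap.ker T'.mulVecLin := by
    simp only [LinearMap.mem_ker, Matrix.mulVecLin_apply, hT'def, Matrix.sub_mulVec]
    have : T.mulVec v = c • v := hv.apply_eq_smul
    rw [this, Matrix.smul_mulVec, Matrix.one_mulVec, sub_self]
  have hne : LinearMap.ker T'.mulVecLin ≠ ⊥ := by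
    intro h
    exact hv.2 (by simpa [h] using hvmem)
  rcases hirr_l _ hker with h | h
  · exact absurd h hne
  · have : T' = 0 := by
      apply matrix_eq_zero_of_mulVec
      intro x
      have : x ∈ LinearMap.ker T'.mulVecLin := h ▸ Submodule.mem_top
      simpa using this
    rw [← sub_eq_zero]
    exact this

lemma Tmat_trace (μ : Measure G) [IsProbabilityMeasure μ] {dl : ℕ}
    {fl : G → Matrix (Fin dl) (Fin dl) ℂ} (hcl : Continuous fl)
    (hul : ∀ g, fl g ∈ Matrix.unitaryGroup (Fin dl) ℂ) (A : Matrix (Fin dl) (Fin dl) ℂ) :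
    Matrix.trace (Tmat μ fl fl A) = Matrix.trace A := by
  have h0 : Matrix.trace (Tmat μ fl fl A) = ∑ i, ∫ g, (fl g * A * star (fl g)) i i ∂μ := rfl
  rw [h0, ← MeasureTheory.integral_finset_sum _
    (fun i _ => integrable_of_cont μ (cont_entry hcl hcl A i i))]
  have h1 : ∀ g : G, ∑ i, (fl g * A * star (fl g)) i i = Matrix.trace A := by
    intro g
    have h2 : ∑ i, (fl g * A * star (fl g)) i i = Matrix.trace (fl g * A * star (fl g)) := rfl
    rw [h2, Matrix.trace_mul_cycle, (hul g).1, Matrix.one_mul]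
  simp only [h1]
  simp

lemma Tmat_same (μ : Measure G) [μ.IsHaarMeasure] [IsProbabilityMeasure μ]
    {dl : ℕ} (hdl : 0 < dl)
    {fl : G → Matrix (Fin dl) (Fin dl) ℂ} (hcl : Continuous fl)
    (hml : ∀ g h, fl (g * h) = fl g * fl h) (h1l : fl 1 = 1)
    (hul : ∀ g, fl g ∈ Matrix.unitaryGroup (Fin dl) ℂ)
    (hirr_l : ∀ p : Submodule ℂ (Fin dl → ℂ),
      (∀ g : G, ∀ x ∈ p, (fl g).mulVec x ∈ p) → p = ⊥ ∨ p = ⊤)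
    (A : Matrix (Fin dl) (Fin dl) ℂ) :
    Tmat μ fl fl A = (Matrix.trace A / (dl : ℂ)) • 1 := by
  obtain ⟨c, hc⟩ := schur_scalar hdl hirr_l
    (fun h => Tmat_intertwine μ hcl hcl hml hml h1l hul A h)
  have htr := Tmat_trace μ hcl hul A
  rw [hc] at htr ⊢
  rw [Matrix.trace_smul, Matrix.trace_one, Fintype.card_fin] at htr
  have hdl' : (dl : ℂ) ≠ 0 := Nat.cast_ne_zero.mpr hdl.ne'
  have : Matrix.trace A / (dl : ℂ) = c := by
    rw [← htr, smul_eq_mul, mul_div_cancel_right₀ _ hdl']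
  rw [this]

lemma schur_orth_same (μ : Measure G) [μ.IsHaarMeasure] [IsProbabilityMeasure μ]
    {dl : ℕ} (hdl : 0 < dl)
    {fl : G → Matrix (Fin dl) (Fin dl) ℂ} (hcl : Continuous fl)
    (hml : ∀ g h, fl (g * h) = fl g * fl h) (h1l : fl 1 = 1)
    (hul : ∀ g, fl g ∈ Matrix.unitaryGroup (Fin dl) ℂ)
    (hirr_l : ∀ p : Submodule ℂ (Fin dl → ℂ),
      (∀ g : G, ∀ x ∈ p, (fl g).mulVec x ∈ p) → p = ⊥ ∨ p = ⊤)
    (k k₂ m m₂ : Fin dl) :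
    ∫ g, fl g k k₂ * star (fl g m m₂) ∂μ
      = if k = m ∧ k₂ = m₂ then ((dl : ℂ))⁻¹ else 0 := by
  have hA := Tmat_same μ hdl hcl hml h1l hul hirr_l (Matrix.single k₂ m₂ (1:ℂ))
  have h1 : Tmat μ fl fl (Matrix.single k₂ m₂ (1:ℂ)) k m
      = ∫ g, fl g k k₂ * star (fl g m m₂) ∂μ := by
    show (∫ g, (fl g * Matrix.single k₂ m₂ (1:ℂ) * star (fl g)) k m ∂μ) = _
    refine integral_congr_ae (Filter.Eventually.of_forall fun g => ?_)
    show (fl g * Matrix.single k₂ m₂ (1:ℂ) * star (fl g)) k m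
      = fl g k k₂ * star (fl g m m₂)
    simp [Matrix.mul_apply, Matrix.single, Matrix.star_apply, ite_and, mul_ite,
      ite_mul, Finset.sum_ite_eq, Finset.sum_ite_eq']
  rw [← h1, hA]
  have htr : Matrix.trace (Matrix.single k₂ m₂ (1:ℂ))
      = if k₂ = m₂ then 1 else 0 := by
    simp [Matrix.trace, Matrix.diag, Matrix.single, Finset.sum_ite_eq, ite_and, eq_comm]
  rw [htr]
  rcases eq_or_ne k₂ m₂ with rfl | hk2
  · rcases eq_or_ne k m with rfl | hk
    · simp [Matrix.smul_apply, Matrix.one_apply_eq, smul_eq_mul, one_div]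
    · simp [Matrix.smul_apply, Matrix.one_apply_ne hk, hk]
  · simp [hk2, Matrix.smul_apply, smul_eq_mul]

lemma schur_orth_diff (μ : Measure G) [μ.IsHaarMeasure] [IsProbabilityMeasure μ]
    {dl ds : ℕ}
    {fl : G → Matrix (Fin dl) (Fin dl) ℂ} {fs : G → Matrix (Fin ds) (Fin ds) ℂ}
    (hcl : Continuous fl) (hcs : Continuous fs)
    (hml : ∀ g h, fl (g * h) = fl g * fl h) (hms : ∀ g h, fs (g * h) = fs g * fs h)
    (h1s : fs 1 = 1)
    (hus : ∀ g, fs g ∈ Matrix.unitaryGroup (Fin ds) ℂ)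
    (hirr_l : ∀ p : Submodule ℂ (Fin dl → ℂ),
      (∀ g : G, ∀ x ∈ p, (fl g).mulVec x ∈ p) → p = ⊥ ∨ p = ⊤)
    (hirr_s : ∀ p : Submodule ℂ (Fin ds → ℂ),
      (∀ g : G, ∀ x ∈ p, (fs g).mulVec x ∈ p) → p = ⊥ ∨ p = ⊤)
    (hno : ¬ ∃ S : Matrix (Fin dl) (Fin ds) ℂ,
      Function.Bijective S.mulVec ∧ ∀ g : G, S * fs g = fl g * S)
    (k : Fin dl) (k₂ : Fin dl) (m : Fin ds) (m₂ : Fin ds) :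
    ∫ g, fl g k k₂ * star (fs g m m₂) ∂μ = 0 := by
  have hA : Tmat μ fl fs (Matrix.single k₂ m₂ (1:ℂ)) = 0 :=
    schur_zero hirr_l hirr_s hno
      (fun h => Tmat_intertwine μ hcl hcs hml hms h1s hus (Matrix.single k₂ m₂ (1:ℂ)) h)
  have h1 : Tmat μ fl fs (Matrix.single k₂ m₂ (1:ℂ)) k m
      = ∫ g, fl g k k₂ * star (fs g m m₂) ∂μ := by
    show (∫ g, (fl g * Matrix.single k₂ m₂ (1:ℂ) * star (fs g)) k m ∂μ) = _
    refine integral_congr_ae (Filter.Eventually.of_forall fun g => ?_)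
    show (fl g * Matrix.single k₂ m₂ (1:ℂ) * star (fs g)) k m
      = fl g k k₂ * star (fs g m m₂)
    simp [Matrix.mul_apply, Matrix.single, Matrix.star_apply, ite_and, mul_ite,
      ite_mul, Finset.sum_ite_eq, Finset.sum_ite_eq']
  rw [← h1, hA]
  simp

end SchurAux

/-- Block formula for the average state (Section 3): by Schur orthogonality,
`ρμ = ⊕_λ d_λ⁻¹ 1_λ ⊗ 1_λ ⊗ |I_{n_λ}⟩⟩⟨⟨I_{n_λ}|`. -/
theorem rhoMuB_entries
    {G : Type} [Group G] [TopologicalSpace G] [IsTopologicalGroup G]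
    [CompactSpace G] [T2Space G] [MeasurableSpace G] [BorelSpace G]
    (μ : Measure G) [μ.IsHaarMeasure] [IsProbabilityMeasure μ]
    {Λ : Type} [Fintype Λ] [Nonempty Λ] [DecidableEq Λ]
    (d n : Λ → ℕ) (hd : ∀ l, 0 < d l) (hn : ∀ l, 0 < n l)
    (f_ : ∀ l : Λ, G → Matrix (Fin (d l)) (Fin (d l)) ℂ)
    (hf_cont : ∀ l, Continuous (f_ l))
    (hf_mul : ∀ (l : Λ) (g h : G), f_ l (g * h) = f_ l g * f_ l h)
    (hf_one : ∀ l, f_ l 1 = 1)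
    (hf_unit : ∀ (l : Λ) (g : G), f_ l g ∈ Matrix.unitaryGroup (Fin (d l)) ℂ)
    (hirr : ∀ (l : Λ) (p : Submodule ℂ (Fin (d l) → ℂ)),
      (∀ g : G, ∀ x ∈ p, (f_ l g).mulVec x ∈ p) → p = ⊥ ∨ p = ⊤)
    (hdis : ∀ l l' : Λ, l ≠ l' → ¬ ∃ S : Matrix (Fin (d l')) (Fin (d l)) ℂ,
      Function.Bijective S.mulVec ∧ ∀ g : G, S * f_ l g = f_ l' g * S)
    :
    (∀ (l : Λ) (k k₂ m m₂ : Fin (d l)) (a a₂ b b₂ : Fin (n l)),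
      rhoMuB μ d n f_ (⟨l, (k, a)⟩, ⟨l, (k₂, a₂)⟩) (⟨l, (m, b)⟩, ⟨l, (m₂, b₂)⟩) =
        if k = m ∧ k₂ = m₂ ∧ a = a₂ ∧ b = b₂ then ((d l : ℂ))⁻¹ else 0) ∧
    (∀ p q : (Σ l : Λ, Fin (d l) × Fin (n l)) × (Σ l : Λ, Fin (d l) × Fin (n l)),
      ¬(p.1.1 = p.2.1 ∧ p.1.1 = q.1.1 ∧ p.1.1 = q.2.1) → rhoMuB μ d n f_ p q = 0) := by
  constructor
  · intro l k k₂ m m₂ a a₂ b b₂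
    have hpt : rhoMuB μ d n f_ (⟨l, (k, a)⟩, ⟨l, (k₂, a₂)⟩) (⟨l, (m, b)⟩, ⟨l, (m₂, b₂)⟩)
        = ∫ g, ((if a = a₂ then (1:ℂ) else 0) * (if b = b₂ then (1:ℂ) else 0)) *
            (f_ l g k k₂ * star (f_ l g m m₂)) ∂μ := by
      refine integral_congr_ae (Filter.Eventually.of_forall fun g => ?_)
      show bigF d n f_ g ⟨l, (k, a)⟩ ⟨l, (k₂, a₂)⟩ *
          star (bigF d n f_ g ⟨l, (m, b)⟩ ⟨l, (m₂, b₂)⟩) = _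
      have hs : star ((if b = b₂ then (1:ℂ) else 0)) = (if b = b₂ then (1:ℂ) else 0) := by
        split <;> simp
      simp only [bigF, Matrix.blockDiagonal'_apply_eq, Matrix.kroneckerMap_apply,
        Matrix.one_apply, star_mul', hs]
      ring
    rw [hpt, MeasureTheory.integral_const_mul,
      schur_orth_same μ (hd l) (hf_cont l) (hf_mul l) (hf_one l) (hf_unit l) (hirr l) k k₂ m m₂]
    by_cases h1 : k = m <;> by_cases h2 : k₂ = m₂ <;> by_cases h3 : a = a₂ <;>
      by_cases h4 : b = b₂ <;> simp [h1, h2, h3, h4]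
  · rintro ⟨⟨l, k, a⟩, ⟨l₂, k₂, a₂⟩⟩ ⟨⟨σ, m, b⟩, ⟨σ₂, m₂, b₂⟩⟩ hne
    by_cases h12 : l = l₂
    · by_cases hss : σ = σ₂
      · subst h12; subst hss
        have hls : l ≠ σ := by
          intro h
          exact hne ⟨rfl, h, h⟩
        have hpt : rhoMuB μ d n f_ (⟨l, (k, a)⟩, ⟨l, (k₂, a₂)⟩) (⟨σ, (m, b)⟩, ⟨σ, (m₂, b₂)⟩)
            = ∫ g, ((if a = a₂ then (1:ℂ) else 0) * (if b = b₂ then (1:ℂ) else 0)) *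
                (f_ l g k k₂ * star (f_ σ g m m₂)) ∂μ := by
          refine integral_congr_ae (Filter.Eventually.of_forall fun g => ?_)
          show bigF d n f_ g ⟨l, (k, a)⟩ ⟨l, (k₂, a₂)⟩ *
              star (bigF d n f_ g ⟨σ, (m, b)⟩ ⟨σ, (m₂, b₂)⟩) = _
          have hs : star ((if b = b₂ then (1:ℂ) else 0)) = (if b = b₂ then (1:ℂ) else 0) := by
            split <;> simp
          simp only [bigF, Matrix.blockDiagonal'_apply_eq, Matrix.kroneckerMap_apply,
            Matrix.one_apply, star_mul', hs]
          ring
        rw [hpt, MeasureTheory.integral_const_mul,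
          schur_orth_diff μ (hf_cont l) (hf_cont σ) (hf_mul l) (hf_mul σ) (hf_one σ)
            (hf_unit σ) (hirr l) (hirr σ) (hdis σ l (Ne.symm hls)) k k₂ m m₂, mul_zero]
      · have hpt : rhoMuB μ d n f_ (⟨l, (k, a)⟩, ⟨l₂, (k₂, a₂)⟩) (⟨σ, (m, b)⟩, ⟨σ₂, (m₂, b₂)⟩)
            = ∫ _g, (0:ℂ) ∂μ := by
          refine integral_congr_ae (Filter.Eventually.of_forall fun g => ?_)
          show bigF d n f_ g ⟨l, (k, a)⟩ ⟨l₂, (k₂, a₂)⟩ *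
              star (bigF d n f_ g ⟨σ, (m, b)⟩ ⟨σ₂, (m₂, b₂)⟩) = 0
          have h0 : bigF d n f_ g ⟨σ, (m, b)⟩ ⟨σ₂, (m₂, b₂)⟩ = 0 :=
            Matrix.blockDiagonal'_apply_ne _ _ _ hss
          rw [h0, star_zero, mul_zero]
        rw [hpt, integral_zero]
    · have hpt : rhoMuB μ d n f_ (⟨l, (k, a)⟩, ⟨l₂, (k₂, a₂)⟩) (⟨σ, (m, b)⟩, ⟨σ₂, (m₂, b₂)⟩)
          = ∫ _g, (0:ℂ) ∂μ := by
        refine integral_congr_ae (Filter.Eventually.of_forall fun g => ?_)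
        show bigF d n f_ g ⟨l, (k, a)⟩ ⟨l₂, (k₂, a₂)⟩ *
            star (bigF d n f_ g ⟨σ, (m, b)⟩ ⟨σ₂, (m₂, b₂)⟩) = 0
        have h0 : bigF d n f_ g ⟨l, (k, a)⟩ ⟨l₂, (k₂, a₂)⟩ = 0 :=
          Matrix.blockDiagonal'_apply_ne _ _ _ h12
        rw [h0, zero_mul]
      rw [hpt, integral_zero]


end GroupEstimation
end
end
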